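/- Let c be a generic linear list, f its piecewise linear map, and s ≤ t real numbers such that no item value c_i lies in the half-open interval (s, t]. Then the map sending each connected component of f^{-1}((−∞, s]) to the connected component of f^{-1}((−∞, t]) containing it is a bijection onto the set of connected components of f^{-1}((−∞, t]). -/
import Mathlib


/-- The piecewise linear map determined by the list `c` (on the domain `[1,m]`). -/
noncomputable def plMap (c : ℕ → ℝ) (x : ℝ) : ℝ :=
  c (Int.floor x).toNat +
    (x - (Int.floor x : ℝ)) * (c ((Int.floor x).toNat + 1) - c (Int.floor x).toNat)

/-- The set of points of the domain `[1,m]` with values in `[A,B]`. -/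
def levelBand (m : ℕ) (c : ℕ → ℝ) (A B : ℝ) : Set ℝ :=
  {x : ℝ | x ∈ Set.Icc (1 : ℝ) (m : ℝ) ∧ plMap c x ∈ Set.Icc A B}

/-- The sublevel set of the map at `s`, within the domain `[1,m]`. -/
def sublevel (m : ℕ) (c : ℕ → ℝ) (s : ℝ) : Set ℝ :=
  {x : ℝ | x ∈ Set.Icc (1 : ℝ) (m : ℝ) ∧ plMap c x ≤ s}

/-- The support of the frame spanned by the items `a` and `b`: the connected component
of `f⁻¹([f a, f b])` (within the domain) containing `a`. -/
def frameSupport (m : ℕ) (c : ℕ → ℝ) (a b : ℕ) : Set ℝ :=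
  connectedComponentIn (levelBand m c (c a) (c b)) (a : ℝ)

/-- `W(a,b)` is a triple-panel window of the piecewise linear map of `c`:
`a` and `b` are items with `c a < c b` lying in a common connected component `[x,y]`
of `f⁻¹([c a, c b])`, and the value at the end of the support away from the mirror
equals `c a`. -/
def IsTPW (m : ℕ) (c : ℕ → ℝ) (a b : ℕ) : Prop :=
  1 ≤ a ∧ a ≤ m ∧ 1 ≤ b ∧ b ≤ m ∧ c a < c b ∧
  (b : ℝ) ∈ frameSupport m c a b ∧
  (if a < b then plMap c (sSup (frameSupport m c a b)) = c a
   else plMap c (sInf (frameSupport m c a b)) = c a)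

/-- `i` is an interior local minimum of the list `c`. -/
def IsLocMin (m : ℕ) (c : ℕ → ℝ) (i : ℕ) : Prop :=
  1 < i ∧ i < m ∧ c i < c (i - 1) ∧ c i < c (i + 1)

/-- `i` is an interior local maximum of the list `c`. -/
def IsLocMax (m : ℕ) (c : ℕ → ℝ) (i : ℕ) : Prop :=
  1 < i ∧ i < m ∧ c (i - 1) < c i ∧ c (i + 1) < c i

/-- `i` is a critical item that is a leaf: an endpoint or an interior local minimum. -/
def IsCritLeaf (m : ℕ) (c : ℕ → ℝ) (i : ℕ) : Prop :=
  i = 1 ∨ i = m ∨ IsLocMin m c i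

/-- `i` is a critical item of the list `c`. -/
def IsCritItem (m : ℕ) (c : ℕ → ℝ) (i : ℕ) : Prop :=
  IsCritLeaf m c i ∨ IsLocMax m c i

/-- On the interval `[n, n+1]` the map `plMap c` is given by the affine formula. -/
lemma plMap_formula (c : ℕ → ℝ) (n : ℕ) (x : ℝ) (h1 : (n : ℝ) ≤ x) (h2 : x ≤ (n : ℝ) + 1) :
    plMap c x = c n + (x - n) * (c (n + 1) - c n) := by
  rcases lt_or_eq_of_le h2 with h2' | h2'
  · have hfl : ⌊x⌋ = (n : ℤ) := by
      rw [Int.floor_eq_iff]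
      constructor
      · exact_mod_cast h1
      · push_cast; linarith
    simp [plMap, hfl]
  · have hfl : ⌊x⌋ = (n : ℤ) + 1 := by
      rw [h2', show (n : ℝ) + 1 = (((n : ℤ) + 1 : ℤ) : ℝ) by push_cast; ring]
      exact Int.floor_intCast _
    have ht : (⌊x⌋).toNat = n + 1 := by rw [hfl]; simp
    unfold plMap
    rw [ht, hfl, h2']
    push_cast
    ring

lemma plMap_nat (c : ℕ → ℝ) (n : ℕ) : plMap c (n : ℝ) = c n := by
  have := plMap_formula c n (n : ℝ) le_rfl (by linarith)
  simpa using this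

section helpers
variable {m : ℕ} {c : ℕ → ℝ} {s t : ℝ}

lemma gap_le_s (hst : s ≤ t) (hgap : ∀ i, 1 ≤ i → i ≤ m → c i ∉ Set.Ioc s t)
    {n : ℕ} (h1 : 1 ≤ n) (h2 : n ≤ m) (h3 : c n ≤ t) : c n ≤ s := by
  by_contra h
  exact hgap n h1 h2 ⟨lt_of_not_ge h, h3⟩

/-- Basic facts about the floor of a point `z ∈ [1, m]`. -/
lemma floor_facts {z : ℝ} (hz1 : (1 : ℝ) ≤ z) :
    1 ≤ (⌊z⌋).toNat ∧ ((⌊z⌋).toNat : ℝ) ≤ z ∧ z ≤ ((⌊z⌋).toNat : ℝ) + 1 := by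
  have hf1 : (1 : ℤ) ≤ ⌊z⌋ := Int.le_floor.mpr (by exact_mod_cast hz1)
  have hcast : ((⌊z⌋).toNat : ℝ) = ((⌊z⌋ : ℤ) : ℝ) := by
    exact_mod_cast congrArg (fun k : ℤ => (k : ℝ)) (Int.toNat_of_nonneg (by linarith))
  refine ⟨by omega, ?_, ?_⟩
  · rw [hcast]; exact Int.floor_le z
  · rw [hcast]; have := Int.lt_floor_add_one z; linarith

/-- Key lemma 1: if the whole segment between two sublevel-`s` points lies in the
sublevel set at `t`, it lies in the sublevel set at `s`. -/
lemma key1 (hst : s ≤ t) (hgap : ∀ i, 1 ≤ i → i ≤ m → c i ∉ Set.Ioc s t)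
    {x y : ℝ} (hx : x ∈ sublevel m c s) (hy : y ∈ sublevel m c s)
    (hsub : Set.Icc x y ⊆ sublevel m c t) :
    Set.Icc x y ⊆ sublevel m c s := by
  intro z hz
  obtain ⟨⟨hz1, hzm⟩, hzt⟩ := hsub hz
  obtain ⟨hzx, hzy⟩ := hz
  refine ⟨⟨hz1, hzm⟩, ?_⟩
  set n := (⌊z⌋).toNat with hn
  obtain ⟨hn1, hnz, hzn1⟩ := floor_facts hz1
  set d := c (n + 1) - c n with hd
  set u := max x (n : ℝ) with hu
  set v := min y ((n : ℝ) + 1) with hv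
  have huz : u ≤ z := max_le hzx hnz
  have hzv : z ≤ v := le_min hzy hzn1
  have hun : (n : ℝ) ≤ u := le_max_right _ _
  have hvn : v ≤ (n : ℝ) + 1 := min_le_right _ _
  have hfu : plMap c u = c n + (u - n) * d :=
    plMap_formula c n u hun (le_trans (le_trans huz hzv) hvn)
  have hfv : plMap c v = c n + (v - n) * d :=
    plMap_formula c n v (le_trans hun (le_trans huz hzv)) hvn
  have hfz : plMap c z = c n + (z - n) * d := plMap_formula c n z hnz hzn1
  -- the values at the auxiliary endpoints are ≤ s
  have hus : plMap c u ≤ s := by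
    rcases le_total (n : ℝ) x with h | h
    · have : u = x := max_eq_left h
      rw [this]; exact hx.2
    · have : u = (n : ℝ) := max_eq_right h
      rw [this, plMap_nat]
      have hmem : ((n : ℝ)) ∈ Set.Icc x y := ⟨h, le_trans hnz hzy⟩
      have hct : c n ≤ t := by have := (hsub hmem).2; rwa [plMap_nat] at this
      have hnm : n ≤ m := by exact_mod_cast le_trans hnz hzm
      exact gap_le_s hst hgap hn1 hnm hct
  have hvs : plMap c v ≤ s := by
    rcases le_total y ((n : ℝ) + 1) with h | h
    · have : v = y := min_eq_left h
      rw [this]; exact hy.2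
    · have : v = (n : ℝ) + 1 := min_eq_right h
      have hcast : ((n : ℝ) + 1) = ((n + 1 : ℕ) : ℝ) := by push_cast; ring
      rw [this, hcast, plMap_nat]
      have hmem : ((n : ℝ) + 1) ∈ Set.Icc x y := ⟨le_trans hzx hzn1, h⟩
      have hct : c (n + 1) ≤ t := by
        have := (hsub hmem).2; rwa [hcast, plMap_nat] at this
      have hnm : n + 1 ≤ m := by
        have : ((n : ℝ) + 1) ≤ (m : ℝ) := le_trans h hy.1.2
        exact_mod_cast this
      exact gap_le_s hst hgap (by omega) hnm hct
  -- affine interpolation bound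
  rcases le_or_gt 0 d with hd0 | hd0
  · rw [hfz]; rw [hfv] at hvs; nlinarith
  · rw [hfz]; rw [hfu] at hus; nlinarith

/-- Key lemma 2: every point of the sublevel set at `t` is connected within it to a
point of the sublevel set at `s`. -/
lemma key2 (hst : s ≤ t) (hgap : ∀ i, 1 ≤ i → i ≤ m → c i ∉ Set.Ioc s t)
    {y : ℝ} (hy : y ∈ sublevel m c t) :
    ∃ x, x ∈ sublevel m c s ∧ x ∈ connectedComponentIn (sublevel m c t) y := by
  obtain ⟨⟨hy1, hym⟩, hyt⟩ := hy
  rcases le_or_gt (plMap c y) s with hys | hys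
  · exact ⟨y, ⟨⟨hy1, hym⟩, hys⟩, mem_connectedComponentIn ⟨⟨hy1, hym⟩, hyt⟩⟩
  set n := (⌊y⌋).toNat with hn
  obtain ⟨hn1, hny, hyn1⟩ := floor_facts hy1
  set d := c (n + 1) - c n with hd
  have hfy : plMap c y = c n + (y - n) * d := plMap_formula c n y hny hyn1
  have hynotint : (n : ℝ) < y := by
    rcases lt_or_eq_of_le hny with h | h
    · exact h
    · exfalso
      have heq : plMap c y = c n := by rw [← h, plMap_nat]
      have hnm : n ≤ m := by exact_mod_cast le_trans hny hym
      have hle := gap_le_s hst hgap hn1 hnm (heq ▸ hyt)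
      rw [heq] at hys; linarith
  rcases le_or_gt 0 d with hd0 | hd0
  · -- slope up: go left to the item `n`
    have hcn : c n ≤ plMap c y := by rw [hfy]; nlinarith
    have hnm : n ≤ m := by exact_mod_cast le_trans hny hym
    have hcns : c n ≤ s := gap_le_s hst hgap hn1 hnm (le_trans hcn hyt)
    have hseg : Set.Icc ((n : ℝ)) y ⊆ sublevel m c t := by
      intro w ⟨hw1, hw2⟩
      refine ⟨⟨le_trans (by exact_mod_cast hn1) hw1, le_trans hw2 hym⟩, ?_⟩
      rw [plMap_formula c n w hw1 (le_trans hw2 hyn1)]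
      rw [hfy] at hyt
      nlinarith
    have hcomp : Set.Icc ((n : ℝ)) y ⊆ connectedComponentIn (sublevel m c t) y :=
      isPreconnected_Icc.subset_connectedComponentIn ⟨hny, le_rfl⟩ hseg
    exact ⟨(n : ℝ), ⟨⟨by exact_mod_cast hn1, by exact_mod_cast hnm⟩, by rw [plMap_nat]; exact hcns⟩,
      hcomp ⟨le_rfl, hny⟩⟩
  · -- slope down: go right to the item `n+1`
    have hcn1 : c (n + 1) ≤ plMap c y := by rw [hfy]; nlinarith
    have hnm : n + 1 ≤ m := by
      have hlt : (n : ℝ) < (m : ℝ) := lt_of_lt_of_le hynotint hym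
      have : n < m := by exact_mod_cast hlt
      omega
    have hcns : c (n + 1) ≤ s := gap_le_s hst hgap (by omega) hnm (le_trans hcn1 hyt)
    have hcast : ((n : ℝ) + 1) = ((n + 1 : ℕ) : ℝ) := by push_cast; ring
    have hseg : Set.Icc y ((n : ℝ) + 1) ⊆ sublevel m c t := by
      intro w ⟨hw1, hw2⟩
      refine ⟨⟨le_trans hy1 hw1, le_trans hw2 (by rw [hcast]; exact_mod_cast hnm)⟩, ?_⟩
      rw [plMap_formula c n w (le_trans hny hw1) hw2]
      rw [hfy] at hyt
      nlinarith
    have hcomp : Set.Icc y ((n : ℝ) + 1) ⊆ connectedComponentIn (sublevel m c t) y :=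
      isPreconnected_Icc.subset_connectedComponentIn ⟨le_rfl, hyn1⟩ hseg
    refine ⟨(n : ℝ) + 1, ⟨⟨?_, by rw [hcast]; exact_mod_cast hnm⟩, ?_⟩, hcomp ⟨hyn1, le_rfl⟩⟩
    · rw [hcast]; exact_mod_cast Nat.one_le_iff_ne_zero.mpr (by omega)
    · rw [hcast, plMap_nat]; exact hcns

end helpers

/-- If no item value lies in `(s, t]`, then sending each connected
component of the sublevel set at `s` to the component of the sublevel set at `t`
containing it is a bijection onto the components of the sublevel set at `t`. -/
theorem statement12 (m : ℕ) (hm : 2 ≤ m) (c : ℕ → ℝ)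
    (hgen : Set.InjOn c (Set.Icc 1 m))
    (s t : ℝ) (hst : s ≤ t)
    (hgap : ∀ i, 1 ≤ i → i ≤ m → c i ∉ Set.Ioc s t) :
    (∀ x ∈ sublevel m c s,
      connectedComponentIn (sublevel m c s) x ⊆ connectedComponentIn (sublevel m c t) x) ∧
    (∀ x ∈ sublevel m c s, ∀ y ∈ sublevel m c s,
      (connectedComponentIn (sublevel m c t) x = connectedComponentIn (sublevel m c t) y ↔
        connectedComponentIn (sublevel m c s) x = connectedComponentIn (sublevel m c s) y)) ∧
    (∀ y ∈ sublevel m c t, ∃ x ∈ sublevel m c s,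
      connectedComponentIn (sublevel m c t) y = connectedComponentIn (sublevel m c t) x) := by
  have hmono : sublevel m c s ⊆ sublevel m c t := fun z ⟨h1, h2⟩ => ⟨h1, le_trans h2 hst⟩
  -- If two sublevel-s points lie in the same component of sublevel t, they lie in the
  -- same component of sublevel s.
  have hsame : ∀ x ∈ sublevel m c s, ∀ y ∈ sublevel m c s,
      connectedComponentIn (sublevel m c t) x = connectedComponentIn (sublevel m c t) y →
      connectedComponentIn (sublevel m c s) x = connectedComponentIn (sublevel m c s) y := by
    intro x hx y hy h
    have hyx : y ∈ connectedComponentIn (sublevel m c t) x := by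
      rw [h]; exact mem_connectedComponentIn (hmono hy)
    have hxx : x ∈ connectedComponentIn (sublevel m c t) x :=
      mem_connectedComponentIn (hmono hx)
    have hpre : IsPreconnected (connectedComponentIn (sublevel m c t) x) :=
      isPreconnected_connectedComponentIn
    rcases le_total x y with hxy | hxy
    · have hIcc : Set.Icc x y ⊆ sublevel m c t :=
        (hpre.Icc_subset hxx hyx).trans (connectedComponentIn_subset _ _)
      have hIs : Set.Icc x y ⊆ sublevel m c s := key1 hst hgap hx hy hIcc
      have : Set.Icc x y ⊆ connectedComponentIn (sublevel m c s) x :=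
        isPreconnected_Icc.subset_connectedComponentIn ⟨le_rfl, hxy⟩ hIs
      exact connectedComponentIn_eq (this ⟨hxy, le_rfl⟩)
    · have hIcc : Set.Icc y x ⊆ sublevel m c t :=
        (hpre.Icc_subset hyx hxx).trans (connectedComponentIn_subset _ _)
      have hIs : Set.Icc y x ⊆ sublevel m c s := key1 hst hgap hy hx hIcc
      have : Set.Icc y x ⊆ connectedComponentIn (sublevel m c s) x :=
        isPreconnected_Icc.subset_connectedComponentIn ⟨hxy, le_rfl⟩ hIs
      exact connectedComponentIn_eq (this ⟨le_rfl, hxy⟩)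
  refine ⟨?_, ?_, ?_⟩
  · intro x _ z hz
    exact connectedComponentIn_mono x hmono hz
  · intro x hx y hy
    constructor
    · exact hsame x hx y hy
    · intro h
      have hyx : y ∈ connectedComponentIn (sublevel m c s) x := by
        rw [h]; exact mem_connectedComponentIn hy
      have : y ∈ connectedComponentIn (sublevel m c t) x :=
        connectedComponentIn_mono x hmono hyx
      exact connectedComponentIn_eq this
  · intro y hy
    obtain ⟨x, hx, hxc⟩ := key2 hst hgap hy
    exact ⟨x, hx, connectedComponentIn_eq hxc⟩
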